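/- Let λ, λ', μ, μ' ∈ ℝ and s_1, s_2, s_3, s_4 ≥ 0, and set A = s_1·[0, (λ, μ, 1)] + s_2·[0, (λ, μ', 1)] + s_3·[0, (λ', μ, 1)] + s_4·[0, (λ', μ', 1)] (a Minkowski sum of four segments in ℝ³), B = [0, e_1], C = [0, e_2]. If s_1·s_4 = s_2·s_3, then V(A,A,A)·V(A,B,C) = (3/2)·V(A,A,B)·V(A,A,C), i.e., equality holds in the zonoid Bezout inequality V(A,A,A)·V(A,B,C) ≤ (3/2)·V(A,A,B)·V(A,A,C); in particular the constant 3/2 cannot be improved. -/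

import Mathlib

open MeasureTheory Pointwise

/-- The segment joining the origin to `v`, as a convex body in `ℝ³`. -/
noncomputable def segCB (v : Fin 3 → ℝ) : ConvexBody (Fin 3 → ℝ) :=
  ⟨segment ℝ 0 v, convex_segment 0 v,
    by rw [← convexHull_pair (𝕜 := ℝ)]; exact (Set.toFinite {0, v}).isCompact_convexHull (𝕜 := ℝ),
    ⟨0, left_mem_segment ℝ 0 v⟩⟩

lemma segCB_coe (v : Fin 3 → ℝ) : (segCB v : Set (Fin 3 → ℝ)) = segment ℝ 0 v := rfl

lemma span2_ne_top (u v : Fin 3 → ℝ) : Submodule.span ℝ {u, v} ≠ ⊤ := by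
  intro h
  have h1 : Module.finrank ℝ (Submodule.span ℝ ({u, v} : Set (Fin 3 → ℝ))) ≤ 2 := by
    apply (finrank_span_le_card _).trans
    · simp [Set.toFinset_insert]
      exact (Finset.card_insert_le _ _).trans (by simp)
  rw [h] at h1
  simp [finrank_top, Module.finrank_pi] at h1

lemma seg_subset_span (u : Fin 3 → ℝ) (w : Set (Fin 3 → ℝ)) (hw : u ∈ w) :
    segment ℝ 0 u ⊆ (Submodule.span ℝ w : Set (Fin 3 → ℝ)) :=
  (Submodule.span ℝ w).convex.segment_subset (Submodule.zero_mem _) (Submodule.subset_span hw)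

lemma vol_zero_span2 (u v : Fin 3 → ℝ) (s : Set (Fin 3 → ℝ))
    (hs : s ⊆ (Submodule.span ℝ {u, v} : Submodule ℝ (Fin 3 → ℝ))) : volume s = 0 :=
  measure_mono_null hs (Measure.addHaar_submodule _ _ (span2_ne_top u v))

lemma vecMul_three (u v w : Fin 3 → ℝ) (y : Fin 3 → ℝ) :
    (Matrix.of ![u, v, w]).vecMulLinear y = y 0 • u + y 1 • v + y 2 • w := by
  funext j
  simp [Matrix.vecMul, dotProduct, Fin.sum_univ_three, Matrix.cons_val_zero,
    Matrix.cons_val_one, Matrix.head_cons]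

lemma segsum_eq_image (u v w : Fin 3 → ℝ) :
    segment ℝ 0 u + segment ℝ 0 v + segment ℝ 0 w
      = (Matrix.of ![u, v, w]).vecMulLinear '' Set.Icc 0 1 := by
  ext x
  simp only [Set.mem_add, Set.mem_image]
  constructor
  · rintro ⟨ab, ⟨a, ha, b, hb, rfl⟩, c, hc, rfl⟩
    rw [segment_eq_image] at ha hb hc
    obtain ⟨t1, ht1, rfl⟩ := ha
    obtain ⟨t2, ht2, rfl⟩ := hb
    obtain ⟨t3, ht3, rfl⟩ := hc
    refine ⟨![t1, t2, t3], ?_, ?_⟩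
    · rw [Set.mem_Icc]
      constructor <;> intro i <;> fin_cases i <;>
        simp_all [ht1.1, ht1.2, ht2.1, ht2.2, ht3.1, ht3.2]
    · rw [vecMul_three]
      simp
  · rintro ⟨y, hy, rfl⟩
    rw [Set.mem_Icc] at hy
    rw [vecMul_three]
    have hseg : ∀ (z : Fin 3 → ℝ) (t : ℝ), 0 ≤ t → t ≤ 1 → t • z ∈ segment ℝ 0 z := by
      intro z t h0 h1
      rw [segment_eq_image]
      exact ⟨t, ⟨h0, h1⟩, by simp⟩
    exact ⟨y 0 • u + y 1 • v, ⟨y 0 • u, hseg u _ (hy.1 0) (hy.2 0), y 1 • v,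
      hseg v _ (hy.1 1) (hy.2 1), rfl⟩, y 2 • w, hseg w _ (hy.1 2) (hy.2 2), rfl⟩

lemma vol_segsum (u v w : Fin 3 → ℝ) :
    (volume (segment ℝ 0 u + segment ℝ 0 v + segment ℝ 0 w)).toReal
      = |(Matrix.of ![u, v, w]).det| := by
  rw [segsum_eq_image, Measure.addHaar_image_linearMap]
  have hdet : LinearMap.det (Matrix.of ![u, v, w]).vecMulLinear = (Matrix.of ![u, v, w]).det := by
    rw [← Matrix.mulVecLin_transpose]
    rw [show (Matrix.of ![u,v,w]).transpose.mulVecLin = Matrix.toLin' (Matrix.of ![u,v,w]).transpose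
      from rfl]
    rw [LinearMap.det_toLin', Matrix.det_transpose]
  rw [hdet]
  have : volume (Set.Icc (0 : Fin 3 → ℝ) 1) = 1 := by
    rw [Real.volume_Icc_pi]
    simp
  rw [this, mul_one, ENNReal.toReal_ofReal (abs_nonneg _)]

section
variable (V : ConvexBody (Fin 3 → ℝ) → ConvexBody (Fin 3 → ℝ) → ConvexBody (Fin 3 → ℝ) → ℝ)
  (hsymm12 : ∀ K L M, V K L M = V L K M)
  (hsymm23 : ∀ K L M, V K L M = V K M L)
  (hadd : ∀ K L M N, V (K + L) M N = V K M N + V L M N)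
  (hsmul : ∀ (c : ℝ) K M N, 0 ≤ c → V (c • K) M N = c * V K M N)
  (hvol : ∀ K, V K K K = (volume (K : Set (Fin 3 → ℝ))).toReal)

set_option linter.unusedSectionVars false

include hsymm12 hadd in
lemma hadd2x : ∀ K L M N, V M (K + L) N = V M K N + V M L N := by
  intro K L M N
  rw [hsymm12 M (K+L), hadd, hsymm12, hsymm12 L]

include hsymm12 hsymm23 hadd in
lemma hadd3x : ∀ K L M N, V M N (K + L) = V M N K + V M N L := by
  intro K L M N
  rw [hsymm23 M N, hadd2x V hsymm12 hadd, hsymm23, hsymm23 M L]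

include hsymm12 hsymm23 hadd hsmul hvol in
lemma Vseg2 (u v : Fin 3 → ℝ) :
    V (segCB u) (segCB u) (segCB v) = 0 ∧ V (segCB u) (segCB v) (segCB v) = 0 := by
  set K := segCB u
  set L := segCB v
  have hsub : ∀ (c d : ℝ), 0 ≤ c → 0 ≤ d →
      ((c • K + d • L : ConvexBody (Fin 3 → ℝ)) : Set (Fin 3 → ℝ))
        ⊆ (Submodule.span ℝ {u, v} : Submodule ℝ (Fin 3 → ℝ)) := by
    intro c d hc hd
    rw [ConvexBody.coe_add, ConvexBody.coe_smul, ConvexBody.coe_smul, segCB_coe, segCB_coe]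
    intro x hx
    obtain ⟨a, ha, b, hb, rfl⟩ := hx
    obtain ⟨a', ha', rfl⟩ := ha
    obtain ⟨b', hb', rfl⟩ := hb
    have h1 := seg_subset_span u {u, v} (Set.mem_insert _ _) ha'
    have h2 := seg_subset_span v {u, v} (Set.mem_insert_of_mem _ rfl) hb'
    exact Submodule.add_mem _ (Submodule.smul_mem _ _ h1) (Submodule.smul_mem _ _ h2)
  have key : ∀ (c : ℝ), 0 ≤ c →
      c^2 * (3 * V K K L) + c * (3 * V K L L) = 0 := by
    intro c hc
    have h0 : V (c • K + L) (c • K + L) (c • K + L) = 0 := by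
      rw [hvol]
      have := hsub c 1 hc zero_le_one
      rw [one_smul] at this
      rw [vol_zero_span2 u v _ this]
      simp
    have hKKK : V K K K = 0 := by
      rw [hvol]
      have : (K : Set (Fin 3 → ℝ)) ⊆ (Submodule.span ℝ {u, v} : Submodule ℝ (Fin 3 → ℝ)) :=
        seg_subset_span u {u, v} (Set.mem_insert _ _)
      rw [vol_zero_span2 u v _ this]; simp
    have hLLL : V L L L = 0 := by
      rw [hvol]
      have : (L : Set (Fin 3 → ℝ)) ⊆ (Submodule.span ℝ {u, v} : Submodule ℝ (Fin 3 → ℝ)) :=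
        seg_subset_span v {u, v} (Set.mem_insert_of_mem _ rfl)
      rw [vol_zero_span2 u v _ this]; simp
    rw [hadd, hadd2x V hsymm12 hadd, hadd2x V hsymm12 hadd,
      hadd3x V hsymm12 hsymm23 hadd, hadd3x V hsymm12 hsymm23 hadd,
      hadd3x V hsymm12 hsymm23 hadd, hadd3x V hsymm12 hsymm23 hadd] at h0
    have e1 : ∀ M N, V (c • K) M N = c * V K M N := fun M N => hsmul c K M N hc
    have e2 : ∀ M N, V M (c • K) N = c * V M K N := by
      intro M N; rw [hsymm12 M, hsmul c K M N hc, hsymm12]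
    have e3 : ∀ M N, V M N (c • K) = c * V M N K := by
      intro M N; rw [hsymm23 M, e2, hsymm23]
    simp only [e1, e2, e3] at h0
    have sK : V L K L = V K L L := by rw [hsymm12]
    have sK2 : V L L K = V K L L := by rw [hsymm23, hsymm12]
    have sK3 : V K L K = V K K L := by rw [hsymm23]
    have sK4 : V L K K = V K K L := by rw [hsymm12, hsymm23]
    simp only [sK, sK2, sK3, sK4, hKKK, hLLL] at h0
    nlinarith [h0]
  have k1 := key 1 zero_le_one
  have k2 := key 2 (by norm_num)
  constructor <;> nlinarith [k1, k2]

include hsymm12 hsymm23 hadd hsmul hvol in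
lemma Vseg (u v w : Fin 3 → ℝ) :
    V (segCB u) (segCB v) (segCB w) = |(Matrix.of ![u, v, w]).det| / 6 := by
  set K := segCB u with hK
  set L := segCB v with hL
  set M := segCB w with hM
  have zz : ∀ (a b : Fin 3 → ℝ), V (segCB a) (segCB a) (segCB b) = 0 ∧
      V (segCB a) (segCB b) (segCB a) = 0 ∧ V (segCB b) (segCB a) (segCB a) = 0 := by
    intro a b
    have h1 := (Vseg2 V hsymm12 hsymm23 hadd hsmul hvol a b).1
    refine ⟨h1, ?_, ?_⟩
    · rw [hsymm23]; exact h1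
    · rw [hsymm12, hsymm23]; exact h1
  have h0 : V (K + L + M) (K + L + M) (K + L + M)
      = |(Matrix.of ![u, v, w]).det| := by
    rw [hvol, ConvexBody.coe_add, ConvexBody.coe_add, segCB_coe, segCB_coe, segCB_coe,
      vol_segsum]
  simp only [hadd, hadd2x V hsymm12 hadd, hadd3x V hsymm12 hsymm23 hadd] at h0
  obtain ⟨a1, a2, a3⟩ := zz u v
  obtain ⟨b1, b2, b3⟩ := zz v u
  obtain ⟨c1, c2, c3⟩ := zz u w
  obtain ⟨d1, d2, d3⟩ := zz w u
  obtain ⟨e1, e2, e3⟩ := zz v w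
  obtain ⟨f1, f2, f3⟩ := zz w v
  obtain ⟨g1, -, -⟩ := zz u u
  obtain ⟨g2, -, -⟩ := zz v v
  obtain ⟨g3, -, -⟩ := zz w w
  have p1 : V K M L = V K L M := by rw [hsymm23]
  have p2 : V L K M = V K L M := by rw [hsymm12]
  have p3 : V L M K = V K L M := by rw [hsymm23, hsymm12]
  have p4 : V M K L = V K L M := by rw [hsymm12, hsymm23]
  have p5 : V M L K = V K L M := by rw [hsymm12, hsymm23, hsymm12]
  rw [hK, hL, hM] at *
  simp only [a1, a2, a3, b1, b2, b3, c1, c2, c3, d1, d2, d3, e1, e2, e3, f1, f2, f3,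
    g1, g2, g3, p1, p2, p3, p4, p5] at h0
  linarith [h0]

end

set_option maxHeartbeats 1600000 in
set_option maxRecDepth 4000 in
theorem stmt_15
    (V : ConvexBody (Fin 3 → ℝ) → ConvexBody (Fin 3 → ℝ) → ConvexBody (Fin 3 → ℝ) → ℝ)
    (hsymm12 : ∀ K L M, V K L M = V L K M)
    (hsymm23 : ∀ K L M, V K L M = V K M L)
    (hadd : ∀ K L M N, V (K + L) M N = V K M N + V L M N)
    (hsmul : ∀ (c : ℝ) K M N, 0 ≤ c → V (c • K) M N = c * V K M N)
    (hvol : ∀ K, V K K K = (volume (K : Set (Fin 3 → ℝ))).toReal)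
    (lam lam' mu mu' s1 s2 s3 s4 : ℝ)
    (hs1 : 0 ≤ s1) (hs2 : 0 ≤ s2) (hs3 : 0 ≤ s3) (hs4 : 0 ≤ s4)
    (hdeg : s1 * s4 = s2 * s3)
    (A : ConvexBody (Fin 3 → ℝ))
    (hA : A = s1 • segCB ![lam, mu, 1] + s2 • segCB ![lam, mu', 1]
        + s3 • segCB ![lam', mu, 1] + s4 • segCB ![lam', mu', 1])
    (B C : ConvexBody (Fin 3 → ℝ))
    (hB : B = segCB ![1, 0, 0]) (hC : C = segCB ![0, 1, 0]) :
    V A A A * V A B C = (3 / 2) * (V A A B * V A A C) := by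
  subst hA hB hC
  have m1 : ∀ (c : ℝ), 0 ≤ c → ∀ K M N, V M (c • K) N = c * V M K N := by
    intro c hc K M N; rw [hsymm12 M, hsmul c K M N hc, hsymm12]
  have m2 : ∀ (c : ℝ), 0 ≤ c → ∀ K M N, V M N (c • K) = c * V M N K := by
    intro c hc K M N; rw [hsymm23 M, m1 c hc, hsymm23]
  have q11 := fun K M N => hsmul s1 K M N hs1
  have q12 := fun K M N => m1 s1 hs1 K M N
  have q13 := fun K M N => m2 s1 hs1 K M N
  have q21 := fun K M N => hsmul s2 K M N hs2
  have q22 := fun K M N => m1 s2 hs2 K M N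
  have q23 := fun K M N => m2 s2 hs2 K M N
  have q31 := fun K M N => hsmul s3 K M N hs3
  have q32 := fun K M N => m1 s3 hs3 K M N
  have q33 := fun K M N => m2 s3 hs3 K M N
  have q41 := fun K M N => hsmul s4 K M N hs4
  have q42 := fun K M N => m1 s4 hs4 K M N
  have q43 := fun K M N => m2 s4 hs4 K M N
  have hV3 := Vseg V hsymm12 hsymm23 hadd hsmul hvol
  have Vu : ∀ a b c d e f : ℝ, V (segCB ![a,b,1]) (segCB ![c,d,1]) (segCB ![e,f,1])
      = |(c - a) * (f - b) - (e - a) * (d - b)| / 6 := by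
    intro a b c d e f
    rw [hV3]
    congr 2
    simp [Matrix.det_fin_three, Matrix.vecHead, Matrix.vecTail]
    try ring
  have VuB : ∀ a b c d : ℝ, V (segCB ![a,b,1]) (segCB ![c,d,1]) (segCB ![(1:ℝ),0,0])
      = |b - d| / 6 := by
    intro a b c d
    rw [hV3]
    congr 2
    simp [Matrix.det_fin_three, Matrix.vecHead, Matrix.vecTail]
    try ring
  have VuC : ∀ a b c d : ℝ, V (segCB ![a,b,1]) (segCB ![c,d,1]) (segCB ![(0:ℝ),1,0])
      = |c - a| / 6 := by
    intro a b c d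
    rw [hV3]
    congr 2
    simp [Matrix.det_fin_three, Matrix.vecHead, Matrix.vecTail]
    try ring
  have VuBC : ∀ a b : ℝ, V (segCB ![a,b,1]) (segCB ![(1:ℝ),0,0]) (segCB ![(0:ℝ),1,0])
      = 1 / 6 := by
    intro a b
    rw [hV3]
    simp [Matrix.det_fin_three]
  have dd0 : |(lam - lam) * (mu - mu) - (lam - lam) * (mu - mu)| = (0:ℝ) := by rw [show (lam - lam) * (mu - mu) - (lam - lam) * (mu - mu) = (0:ℝ) by ring, abs_zero]
  have dd1 : |(lam - lam) * (mu' - mu) - (lam - lam) * (mu - mu)| = (0:ℝ) := by rw [show (lam - lam) * (mu' - mu) - (lam - lam) * (mu - mu) = (0:ℝ) by ring, abs_zero]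
  have dd2 : |(lam - lam) * (mu - mu) - (lam' - lam) * (mu - mu)| = (0:ℝ) := by rw [show (lam - lam) * (mu - mu) - (lam' - lam) * (mu - mu) = (0:ℝ) by ring, abs_zero]
  have dd3 : |(lam - lam) * (mu' - mu) - (lam' - lam) * (mu - mu)| = (0:ℝ) := by rw [show (lam - lam) * (mu' - mu) - (lam' - lam) * (mu - mu) = (0:ℝ) by ring, abs_zero]
  have dd4 : |(lam - lam) * (mu - mu) - (lam - lam) * (mu' - mu)| = (0:ℝ) := by rw [show (lam - lam) * (mu - mu) - (lam - lam) * (mu' - mu) = (0:ℝ) by ring, abs_zero]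
  have dd5 : |(lam - lam) * (mu' - mu) - (lam - lam) * (mu' - mu)| = (0:ℝ) := by rw [show (lam - lam) * (mu' - mu) - (lam - lam) * (mu' - mu) = (0:ℝ) by ring, abs_zero]
  have dd6 : |(lam - lam) * (mu - mu) - (lam' - lam) * (mu' - mu)| = |(lam - lam') * (mu - mu')| := by rw [show (lam - lam) * (mu - mu) - (lam' - lam) * (mu' - mu) = -((lam - lam') * (mu - mu')) by ring, abs_neg]
  have dd7 : |(lam - lam) * (mu' - mu) - (lam' - lam) * (mu' - mu)| = |(lam - lam') * (mu - mu')| := by rw [show (lam - lam) * (mu' - mu) - (lam' - lam) * (mu' - mu) = -((lam - lam') * (mu - mu')) by ring, abs_neg]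
  have dd8 : |(lam' - lam) * (mu - mu) - (lam - lam) * (mu - mu)| = (0:ℝ) := by rw [show (lam' - lam) * (mu - mu) - (lam - lam) * (mu - mu) = (0:ℝ) by ring, abs_zero]
  have dd9 : |(lam' - lam) * (mu' - mu) - (lam - lam) * (mu - mu)| = |(lam - lam') * (mu - mu')| := by rw [show (lam' - lam) * (mu' - mu) - (lam - lam) * (mu - mu) = (lam - lam') * (mu - mu') by ring]
  have dd10 : |(lam' - lam) * (mu - mu) - (lam' - lam) * (mu - mu)| = (0:ℝ) := by rw [show (lam' - lam) * (mu - mu) - (lam' - lam) * (mu - mu) = (0:ℝ) by ring, abs_zero]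
  have dd11 : |(lam' - lam) * (mu' - mu) - (lam' - lam) * (mu - mu)| = |(lam - lam') * (mu - mu')| := by rw [show (lam' - lam) * (mu' - mu) - (lam' - lam) * (mu - mu) = (lam - lam') * (mu - mu') by ring]
  have dd12 : |(lam' - lam) * (mu - mu) - (lam - lam) * (mu' - mu)| = (0:ℝ) := by rw [show (lam' - lam) * (mu - mu) - (lam - lam) * (mu' - mu) = (0:ℝ) by ring, abs_zero]
  have dd13 : |(lam' - lam) * (mu' - mu) - (lam - lam) * (mu' - mu)| = |(lam - lam') * (mu - mu')| := by rw [show (lam' - lam) * (mu' - mu) - (lam - lam) * (mu' - mu) = (lam - lam') * (mu - mu') by ring]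
  have dd14 : |(lam' - lam) * (mu - mu) - (lam' - lam) * (mu' - mu)| = |(lam - lam') * (mu - mu')| := by rw [show (lam' - lam) * (mu - mu) - (lam' - lam) * (mu' - mu) = -((lam - lam') * (mu - mu')) by ring, abs_neg]
  have dd15 : |(lam' - lam) * (mu' - mu) - (lam' - lam) * (mu' - mu)| = (0:ℝ) := by rw [show (lam' - lam) * (mu' - mu) - (lam' - lam) * (mu' - mu) = (0:ℝ) by ring, abs_zero]
  have dd16 : |(lam - lam) * (mu - mu') - (lam - lam) * (mu - mu')| = (0:ℝ) := by rw [show (lam - lam) * (mu - mu') - (lam - lam) * (mu - mu') = (0:ℝ) by ring, abs_zero]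
  have dd17 : |(lam - lam) * (mu' - mu') - (lam - lam) * (mu - mu')| = (0:ℝ) := by rw [show (lam - lam) * (mu' - mu') - (lam - lam) * (mu - mu') = (0:ℝ) by ring, abs_zero]
  have dd18 : |(lam - lam) * (mu - mu') - (lam' - lam) * (mu - mu')| = |(lam - lam') * (mu - mu')| := by rw [show (lam - lam) * (mu - mu') - (lam' - lam) * (mu - mu') = (lam - lam') * (mu - mu') by ring]
  have dd19 : |(lam - lam) * (mu' - mu') - (lam' - lam) * (mu - mu')| = |(lam - lam') * (mu - mu')| := by rw [show (lam - lam) * (mu' - mu') - (lam' - lam) * (mu - mu') = (lam - lam') * (mu - mu') by ring]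
  have dd20 : |(lam - lam) * (mu - mu') - (lam - lam) * (mu' - mu')| = (0:ℝ) := by rw [show (lam - lam) * (mu - mu') - (lam - lam) * (mu' - mu') = (0:ℝ) by ring, abs_zero]
  have dd21 : |(lam - lam) * (mu' - mu') - (lam - lam) * (mu' - mu')| = (0:ℝ) := by rw [show (lam - lam) * (mu' - mu') - (lam - lam) * (mu' - mu') = (0:ℝ) by ring, abs_zero]
  have dd22 : |(lam - lam) * (mu - mu') - (lam' - lam) * (mu' - mu')| = (0:ℝ) := by rw [show (lam - lam) * (mu - mu') - (lam' - lam) * (mu' - mu') = (0:ℝ) by ring, abs_zero]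
  have dd23 : |(lam - lam) * (mu' - mu') - (lam' - lam) * (mu' - mu')| = (0:ℝ) := by rw [show (lam - lam) * (mu' - mu') - (lam' - lam) * (mu' - mu') = (0:ℝ) by ring, abs_zero]
  have dd24 : |(lam' - lam) * (mu - mu') - (lam - lam) * (mu - mu')| = |(lam - lam') * (mu - mu')| := by rw [show (lam' - lam) * (mu - mu') - (lam - lam) * (mu - mu') = -((lam - lam') * (mu - mu')) by ring, abs_neg]
  have dd25 : |(lam' - lam) * (mu' - mu') - (lam - lam) * (mu - mu')| = (0:ℝ) := by rw [show (lam' - lam) * (mu' - mu') - (lam - lam) * (mu - mu') = (0:ℝ) by ring, abs_zero]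
  have dd26 : |(lam' - lam) * (mu - mu') - (lam' - lam) * (mu - mu')| = (0:ℝ) := by rw [show (lam' - lam) * (mu - mu') - (lam' - lam) * (mu - mu') = (0:ℝ) by ring, abs_zero]
  have dd27 : |(lam' - lam) * (mu' - mu') - (lam' - lam) * (mu - mu')| = |(lam - lam') * (mu - mu')| := by rw [show (lam' - lam) * (mu' - mu') - (lam' - lam) * (mu - mu') = (lam - lam') * (mu - mu') by ring]
  have dd28 : |(lam' - lam) * (mu - mu') - (lam - lam) * (mu' - mu')| = |(lam - lam') * (mu - mu')| := by rw [show (lam' - lam) * (mu - mu') - (lam - lam) * (mu' - mu') = -((lam - lam') * (mu - mu')) by ring, abs_neg]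
  have dd29 : |(lam' - lam) * (mu' - mu') - (lam - lam) * (mu' - mu')| = (0:ℝ) := by rw [show (lam' - lam) * (mu' - mu') - (lam - lam) * (mu' - mu') = (0:ℝ) by ring, abs_zero]
  have dd30 : |(lam' - lam) * (mu - mu') - (lam' - lam) * (mu' - mu')| = |(lam - lam') * (mu - mu')| := by rw [show (lam' - lam) * (mu - mu') - (lam' - lam) * (mu' - mu') = -((lam - lam') * (mu - mu')) by ring, abs_neg]
  have dd31 : |(lam' - lam) * (mu' - mu') - (lam' - lam) * (mu' - mu')| = (0:ℝ) := by rw [show (lam' - lam) * (mu' - mu') - (lam' - lam) * (mu' - mu') = (0:ℝ) by ring, abs_zero]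
  have dd32 : |(lam - lam') * (mu - mu) - (lam - lam') * (mu - mu)| = (0:ℝ) := by rw [show (lam - lam') * (mu - mu) - (lam - lam') * (mu - mu) = (0:ℝ) by ring, abs_zero]
  have dd33 : |(lam - lam') * (mu' - mu) - (lam - lam') * (mu - mu)| = |(lam - lam') * (mu - mu')| := by rw [show (lam - lam') * (mu' - mu) - (lam - lam') * (mu - mu) = -((lam - lam') * (mu - mu')) by ring, abs_neg]
  have dd34 : |(lam - lam') * (mu - mu) - (lam' - lam') * (mu - mu)| = (0:ℝ) := by rw [show (lam - lam') * (mu - mu) - (lam' - lam') * (mu - mu) = (0:ℝ) by ring, abs_zero]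
  have dd35 : |(lam - lam') * (mu' - mu) - (lam' - lam') * (mu - mu)| = |(lam - lam') * (mu - mu')| := by rw [show (lam - lam') * (mu' - mu) - (lam' - lam') * (mu - mu) = -((lam - lam') * (mu - mu')) by ring, abs_neg]
  have dd36 : |(lam - lam') * (mu - mu) - (lam - lam') * (mu' - mu)| = |(lam - lam') * (mu - mu')| := by rw [show (lam - lam') * (mu - mu) - (lam - lam') * (mu' - mu) = (lam - lam') * (mu - mu') by ring]
  have dd37 : |(lam - lam') * (mu' - mu) - (lam - lam') * (mu' - mu)| = (0:ℝ) := by rw [show (lam - lam') * (mu' - mu) - (lam - lam') * (mu' - mu) = (0:ℝ) by ring, abs_zero]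
  have dd38 : |(lam - lam') * (mu - mu) - (lam' - lam') * (mu' - mu)| = (0:ℝ) := by rw [show (lam - lam') * (mu - mu) - (lam' - lam') * (mu' - mu) = (0:ℝ) by ring, abs_zero]
  have dd39 : |(lam - lam') * (mu' - mu) - (lam' - lam') * (mu' - mu)| = |(lam - lam') * (mu - mu')| := by rw [show (lam - lam') * (mu' - mu) - (lam' - lam') * (mu' - mu) = -((lam - lam') * (mu - mu')) by ring, abs_neg]
  have dd40 : |(lam' - lam') * (mu - mu) - (lam - lam') * (mu - mu)| = (0:ℝ) := by rw [show (lam' - lam') * (mu - mu) - (lam - lam') * (mu - mu) = (0:ℝ) by ring, abs_zero]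
  have dd41 : |(lam' - lam') * (mu' - mu) - (lam - lam') * (mu - mu)| = (0:ℝ) := by rw [show (lam' - lam') * (mu' - mu) - (lam - lam') * (mu - mu) = (0:ℝ) by ring, abs_zero]
  have dd42 : |(lam' - lam') * (mu - mu) - (lam' - lam') * (mu - mu)| = (0:ℝ) := by rw [show (lam' - lam') * (mu - mu) - (lam' - lam') * (mu - mu) = (0:ℝ) by ring, abs_zero]
  have dd43 : |(lam' - lam') * (mu' - mu) - (lam' - lam') * (mu - mu)| = (0:ℝ) := by rw [show (lam' - lam') * (mu' - mu) - (lam' - lam') * (mu - mu) = (0:ℝ) by ring, abs_zero]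
  have dd44 : |(lam' - lam') * (mu - mu) - (lam - lam') * (mu' - mu)| = |(lam - lam') * (mu - mu')| := by rw [show (lam' - lam') * (mu - mu) - (lam - lam') * (mu' - mu) = (lam - lam') * (mu - mu') by ring]
  have dd45 : |(lam' - lam') * (mu' - mu) - (lam - lam') * (mu' - mu)| = |(lam - lam') * (mu - mu')| := by rw [show (lam' - lam') * (mu' - mu) - (lam - lam') * (mu' - mu) = (lam - lam') * (mu - mu') by ring]
  have dd46 : |(lam' - lam') * (mu - mu) - (lam' - lam') * (mu' - mu)| = (0:ℝ) := by rw [show (lam' - lam') * (mu - mu) - (lam' - lam') * (mu' - mu) = (0:ℝ) by ring, abs_zero]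
  have dd47 : |(lam' - lam') * (mu' - mu) - (lam' - lam') * (mu' - mu)| = (0:ℝ) := by rw [show (lam' - lam') * (mu' - mu) - (lam' - lam') * (mu' - mu) = (0:ℝ) by ring, abs_zero]
  have dd48 : |(lam - lam') * (mu - mu') - (lam - lam') * (mu - mu')| = (0:ℝ) := by rw [show (lam - lam') * (mu - mu') - (lam - lam') * (mu - mu') = (0:ℝ) by ring, abs_zero]
  have dd49 : |(lam - lam') * (mu' - mu') - (lam - lam') * (mu - mu')| = |(lam - lam') * (mu - mu')| := by rw [show (lam - lam') * (mu' - mu') - (lam - lam') * (mu - mu') = -((lam - lam') * (mu - mu')) by ring, abs_neg]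
  have dd50 : |(lam - lam') * (mu - mu') - (lam' - lam') * (mu - mu')| = |(lam - lam') * (mu - mu')| := by rw [show (lam - lam') * (mu - mu') - (lam' - lam') * (mu - mu') = (lam - lam') * (mu - mu') by ring]
  have dd51 : |(lam - lam') * (mu' - mu') - (lam' - lam') * (mu - mu')| = (0:ℝ) := by rw [show (lam - lam') * (mu' - mu') - (lam' - lam') * (mu - mu') = (0:ℝ) by ring, abs_zero]
  have dd52 : |(lam - lam') * (mu - mu') - (lam - lam') * (mu' - mu')| = |(lam - lam') * (mu - mu')| := by rw [show (lam - lam') * (mu - mu') - (lam - lam') * (mu' - mu') = (lam - lam') * (mu - mu') by ring]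
  have dd53 : |(lam - lam') * (mu' - mu') - (lam - lam') * (mu' - mu')| = (0:ℝ) := by rw [show (lam - lam') * (mu' - mu') - (lam - lam') * (mu' - mu') = (0:ℝ) by ring, abs_zero]
  have dd54 : |(lam - lam') * (mu - mu') - (lam' - lam') * (mu' - mu')| = |(lam - lam') * (mu - mu')| := by rw [show (lam - lam') * (mu - mu') - (lam' - lam') * (mu' - mu') = (lam - lam') * (mu - mu') by ring]
  have dd55 : |(lam - lam') * (mu' - mu') - (lam' - lam') * (mu' - mu')| = (0:ℝ) := by rw [show (lam - lam') * (mu' - mu') - (lam' - lam') * (mu' - mu') = (0:ℝ) by ring, abs_zero]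
  have dd56 : |(lam' - lam') * (mu - mu') - (lam - lam') * (mu - mu')| = |(lam - lam') * (mu - mu')| := by rw [show (lam' - lam') * (mu - mu') - (lam - lam') * (mu - mu') = -((lam - lam') * (mu - mu')) by ring, abs_neg]
  have dd57 : |(lam' - lam') * (mu' - mu') - (lam - lam') * (mu - mu')| = |(lam - lam') * (mu - mu')| := by rw [show (lam' - lam') * (mu' - mu') - (lam - lam') * (mu - mu') = -((lam - lam') * (mu - mu')) by ring, abs_neg]
  have dd58 : |(lam' - lam') * (mu - mu') - (lam' - lam') * (mu - mu')| = (0:ℝ) := by rw [show (lam' - lam') * (mu - mu') - (lam' - lam') * (mu - mu') = (0:ℝ) by ring, abs_zero]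
  have dd59 : |(lam' - lam') * (mu' - mu') - (lam' - lam') * (mu - mu')| = (0:ℝ) := by rw [show (lam' - lam') * (mu' - mu') - (lam' - lam') * (mu - mu') = (0:ℝ) by ring, abs_zero]
  have dd60 : |(lam' - lam') * (mu - mu') - (lam - lam') * (mu' - mu')| = (0:ℝ) := by rw [show (lam' - lam') * (mu - mu') - (lam - lam') * (mu' - mu') = (0:ℝ) by ring, abs_zero]
  have dd61 : |(lam' - lam') * (mu' - mu') - (lam - lam') * (mu' - mu')| = (0:ℝ) := by rw [show (lam' - lam') * (mu' - mu') - (lam - lam') * (mu' - mu') = (0:ℝ) by ring, abs_zero]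
  have dd62 : |(lam' - lam') * (mu - mu') - (lam' - lam') * (mu' - mu')| = (0:ℝ) := by rw [show (lam' - lam') * (mu - mu') - (lam' - lam') * (mu' - mu') = (0:ℝ) by ring, abs_zero]
  have dd63 : |(lam' - lam') * (mu' - mu') - (lam' - lam') * (mu' - mu')| = (0:ℝ) := by rw [show (lam' - lam') * (mu' - mu') - (lam' - lam') * (mu' - mu') = (0:ℝ) by ring, abs_zero]
  simp only [hadd, hadd2x V hsymm12 hadd, hadd3x V hsymm12 hsymm23 hadd,
    q11, q12, q13, q21, q22, q23, q31, q32, q33, q41, q42, q43,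
    Vu, VuB, VuC, VuBC]
  simp only [dd0, dd1, dd2, dd3, dd4, dd5, dd6, dd7, dd8, dd9, dd10, dd11, dd12, dd13, dd14, dd15, dd16, dd17, dd18, dd19, dd20, dd21, dd22, dd23, dd24, dd25, dd26, dd27, dd28, dd29, dd30, dd31, dd32, dd33, dd34, dd35, dd36, dd37, dd38, dd39, dd40, dd41, dd42, dd43, dd44, dd45, dd46, dd47, dd48, dd49, dd50, dd51, dd52, dd53, dd54, dd55, dd56, dd57, dd58, dd59, dd60, dd61, dd62, dd63]
  simp only [sub_self, abs_zero, abs_sub_comm mu' mu, abs_sub_comm lam' lam, abs_mul]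
  linear_combination (-(|lam - lam'| * |mu - mu'| / 6) * (s1 * s4 - s2 * s3)) * hdeg
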